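/- (Dual form of the geodesic equation) Let ρ(t) be strictly positive in the probability simplex and Φ(t)∈ℝⁿ satisfy ρ̇ = L(ρ)Φ. Then ρ(t) solves the Wasserstein geodesic equation ρ̈ − L(ρ̇)L(ρ)^†ρ̇ + (1/2)L(ρ)(∇_GL(ρ)^†ρ̇ ∘ ∇_GL(ρ)^†ρ̇) = 0 if and only if (ρ,Φ) solve the discrete Hamiltonian system ρ̇ + div_G(ρ∇_GΦ)=0 and Φ̇ + (1/2)∇_GΦ∘∇_GΦ = c(t)·(1,…,1)ᵀ for some scalar function c(t). -/

import Mathlib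

open Matrix

/-- Discrete gradient matrix `D ∈ ℝ^{|E|×n}` with entries `±√ω_{ij}`. -/
noncomputable def gradMat {n : ℕ} {E : Type} (sE tE : E → Fin n) (w : E → ℝ) :
    Matrix E (Fin n) ℝ :=
  fun e k => if k = sE e then Real.sqrt (w e) else if k = tE e then -Real.sqrt (w e) else 0

/-- Weighted graph Laplacian `L(a) = Dᵀ Θ(a) D` with `Θ(a)` diagonal with entries
`(a_i + a_j)/2` on edges. -/
noncomputable def Lw {n : ℕ} {E : Type} [Fintype E] [DecidableEq E] (sE tE : E → Fin n) (w : E → ℝ)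
    (a : Fin n → ℝ) : Matrix (Fin n) (Fin n) ℝ :=
  (gradMat sE tE w)ᵀ * Matrix.diagonal (fun e => (a (sE e) + a (tE e)) / 2) * gradMat sE tE w

/-- `B` is the Moore–Penrose pseudoinverse of `A` (the four Penrose conditions). -/
def IsPInv {n : ℕ} (A B : Matrix (Fin n) (Fin n) ℝ) : Prop :=
  A * B * A = A ∧ B * A * B = B ∧ (A * B)ᵀ = A * B ∧ (B * A)ᵀ = B * A

/-- Vertex-wise circle product of the gradient fields of two potentials:
`(∇_GΦ ∘ ∇_GΨ)_i = (1/2)·Σ_{j ∈ N(i)} ω_{ij}(Φ_i − Φ_j)(Ψ_i − Ψ_j)`. -/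
noncomputable def circ {n : ℕ} {E : Type} [Fintype E] (sE tE : E → Fin n) (w : E → ℝ)
    (Φ Ψ : Fin n → ℝ) : Fin n → ℝ :=
  fun i => (1 / 2) *
    ∑ e : E, (if sE e = i ∨ tE e = i then
      w e * (Φ (sE e) - Φ (tE e)) * (Ψ (sE e) - Ψ (tE e)) else 0)

/-- The normalized all-ones vector `u₀ = (1/√n)(1,…,1)ᵀ`. -/
noncomputable def onesVec (n : ℕ) : Fin n → ℝ := fun _ => 1 / Real.sqrt n

section Aux

set_option linter.unusedSectionVars false

variable {n : ℕ} {E : Type} [Fintype E] [DecidableEq E] (sE tE : E → Fin n) (w : E → ℝ)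

lemma Lw_apply' (a v : Fin n → ℝ) (i : Fin n) : (Lw sE tE w a *ᵥ v) i =
    ∑ e, gradMat sE tE w e i * (((a (sE e) + a (tE e))/2) * ((gradMat sE tE w *ᵥ v) e)) := by
  rw [Lw, ← Matrix.mulVec_mulVec, ← Matrix.mulVec_mulVec]
  simp [Matrix.mulVec, dotProduct, Matrix.diagonal, Finset.mul_sum, ite_mul, Finset.sum_ite_eq]

lemma gradMat_mulVec_one (e : E) :
    (gradMat sE tE w *ᵥ (fun _ => (1:ℝ))) e = if sE e = tE e then Real.sqrt (w e) else 0 := by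
  simp only [Matrix.mulVec, dotProduct, gradMat, mul_one]
  by_cases h : sE e = tE e
  · rw [if_pos h]
    rw [Finset.sum_congr rfl (fun j _ => show _ = if j = sE e then Real.sqrt (w e) else 0 by
      split_ifs <;> simp_all)]
    simp
  · rw [if_neg h]
    rw [Finset.sum_congr rfl (fun j _ => show _ =
      (if j = sE e then Real.sqrt (w e) else 0) + (if j = tE e then -Real.sqrt (w e) else 0) by
      split_ifs <;> simp_all)]
    rw [Finset.sum_add_distrib]
    simp

lemma no_loops (hw : ∀ e, 0 < w e) (ρ0 : Fin n → ℝ) (hpos : ∀ i, 0 < ρ0 i)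
    (h : Lw sE tE w ρ0 *ᵥ (fun _ => (1:ℝ)) = 0) : ∀ e, sE e ≠ tE e := by
  intro e0 hloop
  have hi := congrFun h (sE e0)
  rw [Lw_apply', Pi.zero_apply] at hi
  have hterm : ∀ e ∈ Finset.univ, (0:ℝ) ≤ gradMat sE tE w e (sE e0) *
      (((ρ0 (sE e) + ρ0 (tE e))/2) * ((gradMat sE tE w *ᵥ (fun _ => (1:ℝ))) e)) := by
    intro e _
    rw [gradMat_mulVec_one]
    by_cases h1 : sE e = tE e
    · rw [if_pos h1]
      have hg : gradMat sE tE w e (sE e0) = if sE e0 = sE e then Real.sqrt (w e) else 0 := by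
        simp only [gradMat]
        split_ifs <;> simp_all
      rw [hg]
      split_ifs with h2
      · have h1 := hpos (sE e); have h2 := hpos (tE e)
        have h3 := Real.sqrt_nonneg (w e)
        exact mul_nonneg h3 (mul_nonneg (by linarith) h3)
      · simp
    · simp [if_neg h1]
  have hz := (Finset.sum_eq_zero_iff_of_nonneg hterm).mp hi e0 (Finset.mem_univ e0)
  rw [gradMat_mulVec_one, if_pos hloop] at hz
  have hg : gradMat sE tE w e0 (sE e0) = Real.sqrt (w e0) := by
    simp [gradMat]
  rw [hg] at hz
  have : Real.sqrt (w e0) * ((ρ0 (sE e0) + ρ0 (tE e0)) / 2 * Real.sqrt (w e0)) > 0 := by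
    have h1 := hpos (sE e0); have h2 := hpos (tE e0)
    have : 0 < Real.sqrt (w e0) := Real.sqrt_pos.mpr (hw e0)
    positivity
  linarith

lemma gradMat_mulVec_ne {e : E} (hne : sE e ≠ tE e) (v : Fin n → ℝ) :
    (gradMat sE tE w *ᵥ v) e = Real.sqrt (w e) * (v (sE e) - v (tE e)) := by
  simp only [Matrix.mulVec, dotProduct, gradMat]
  rw [Finset.sum_congr rfl (fun j _ => show _ =
    (if j = sE e then Real.sqrt (w e) * v j else 0) +
      (if j = tE e then -Real.sqrt (w e) * v j else 0) by
    split_ifs <;> simp_all)]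
  rw [Finset.sum_add_distrib]
  simp
  ring

lemma Lw_apply (hnl : ∀ e, sE e ≠ tE e) (a v : Fin n → ℝ) (i : Fin n) :
    (Lw sE tE w a *ᵥ v) i = ∑ e, gradMat sE tE w e i *
      (((a (sE e) + a (tE e))/2) * (Real.sqrt (w e) * (v (sE e) - v (tE e)))) := by
  rw [Lw_apply']
  exact Finset.sum_congr rfl fun e _ => by rw [gradMat_mulVec_ne sE tE w (hnl e)]

lemma Lw_shift (hnl : ∀ e, sE e ≠ tE e) (a v : Fin n → ℝ) (c : ℝ) :
    Lw sE tE w a *ᵥ (fun i => v i + c) = Lw sE tE w a *ᵥ v := by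
  funext i
  rw [Lw_apply sE tE w hnl, Lw_apply sE tE w hnl]
  exact Finset.sum_congr rfl fun e _ => by ring_nf

lemma circ_shift (Φ : Fin n → ℝ) (c : ℝ) :
    circ sE tE w (fun i => Φ i + c) (fun i => Φ i + c) = circ sE tE w Φ Φ := by
  funext i
  simp only [circ]
  congr 1
  exact Finset.sum_congr rfl fun e _ => by split_ifs <;> ring_nf

lemma derivLw_eq (hnl : ∀ e, sE e ≠ tE e)
    (ρc dρ ddρ Φ dΦ : ℝ → Fin n → ℝ)
    (hd1 : ∀ t, HasDerivAt ρc (dρ t) t) (hd2 : ∀ t, HasDerivAt dρ (ddρ t) t)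
    (hd3 : ∀ t, HasDerivAt Φ (dΦ t) t)
    (hΦ : ∀ t, dρ t = Lw sE tE w (ρc t) *ᵥ Φ t) (t : ℝ) :
    ddρ t = Lw sE tE w (dρ t) *ᵥ Φ t + Lw sE tE w (ρc t) *ᵥ dΦ t := by
  have key : HasDerivAt dρ (Lw sE tE w (dρ t) *ᵥ Φ t + Lw sE tE w (ρc t) *ᵥ dΦ t) t := by
    rw [hasDerivAt_pi]
    intro i
    have hfun : (fun s => dρ s i) = fun s => ∑ e, gradMat sE tE w e i *
        (((ρc s (sE e) + ρc s (tE e))/2) *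
          (Real.sqrt (w e) * (Φ s (sE e) - Φ s (tE e)))) := by
      funext s
      rw [show dρ s i = (Lw sE tE w (ρc s) *ᵥ Φ s) i from congrFun (hΦ s) i,
        Lw_apply sE tE w hnl]
    rw [hfun]
    have hsum : HasDerivAt (fun s => ∑ e, gradMat sE tE w e i *
        (((ρc s (sE e) + ρc s (tE e))/2) *
          (Real.sqrt (w e) * (Φ s (sE e) - Φ s (tE e)))))
        (∑ e, gradMat sE tE w e i *
          (((dρ t (sE e) + dρ t (tE e))/2) *
            (Real.sqrt (w e) * (Φ t (sE e) - Φ t (tE e))) +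
           ((ρc t (sE e) + ρc t (tE e))/2) *
            (Real.sqrt (w e) * (dΦ t (sE e) - dΦ t (tE e))))) t := by
      apply HasDerivAt.fun_sum
      intro e _
      have hρa := hasDerivAt_pi.1 (hd1 t) (sE e)
      have hρb := hasDerivAt_pi.1 (hd1 t) (tE e)
      have hΦa := hasDerivAt_pi.1 (hd3 t) (sE e)
      have hΦb := hasDerivAt_pi.1 (hd3 t) (tE e)
      exact (((hρa.add hρb).div_const 2).mul ((hΦa.sub hΦb).const_mul
        (Real.sqrt (w e)))).const_mul _
    refine hsum.congr_deriv ?_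
    rw [Pi.add_apply, Lw_apply sE tE w hnl, Lw_apply sE tE w hnl,
      ← Finset.sum_add_distrib]
    exact Finset.sum_congr rfl fun e _ => by ring
  exact (hd2 t).unique key

end Aux

theorem geodesic_equation_dual
    {n : ℕ} {E : Type} [Fintype E] [DecidableEq E]
    (sE tE : E → Fin n) (w : E → ℝ)
    (hw : ∀ e, 0 < w e)
    (hconn : ∀ Φ : Fin n → ℝ, (∀ e, Φ (sE e) = Φ (tE e)) → ∀ i j, Φ i = Φ j)
    (ρc dρ ddρ Φ dΦ : ℝ → Fin n → ℝ)
    (hpos : ∀ t i, 0 < ρc t i) (hsum : ∀ t, ∑ i, ρc t i = 1)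
    (hd1 : ∀ t, HasDerivAt ρc (dρ t) t) (hd2 : ∀ t, HasDerivAt dρ (ddρ t) t)
    (hd3 : ∀ t, HasDerivAt Φ (dΦ t) t)
    (hΦ : ∀ t, dρ t = Lw sE tE w (ρc t) *ᵥ Φ t)
    (Ldag : ℝ → Matrix (Fin n) (Fin n) ℝ)
    (hpinv : ∀ t, IsPInv (Lw sE tE w (ρc t)) (Ldag t))
    (hker : ∀ t, ∀ Ψ : Fin n → ℝ,
      Lw sE tE w (ρc t) *ᵥ Ψ = 0 ↔ ∃ c : ℝ, ∀ i, Ψ i = c) :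
    (∀ t : ℝ,
      ddρ t - Lw sE tE w (dρ t) *ᵥ (Ldag t *ᵥ dρ t) +
        (1/2 : ℝ) • (Lw sE tE w (ρc t) *ᵥ
          circ sE tE w (Ldag t *ᵥ dρ t) (Ldag t *ᵥ dρ t)) = 0) ↔
    ((∀ t : ℝ, dρ t + -(Lw sE tE w (ρc t) *ᵥ Φ t) = 0) ∧
      ∃ c : ℝ → ℝ, ∀ t : ℝ, ∀ i : Fin n,
        dΦ t i + (1/2 : ℝ) * circ sE tE w (Φ t) (Φ t) i = c t) := by
  -- no self-loops
  have hnl : ∀ e, sE e ≠ tE e := by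
    apply no_loops sE tE w hw (ρc 0) (hpos 0)
    exact (hker 0 (fun _ => 1)).2 ⟨1, fun _ => rfl⟩
  -- the projected potential Ψ t = Ldag t *ᵥ dρ t differs from Φ t by a constant
  have hΨ : ∀ t, ∃ c : ℝ, (Ldag t *ᵥ dρ t) = fun i => Φ t i + c := by
    intro t
    have hLΨ : Lw sE tE w (ρc t) *ᵥ (Ldag t *ᵥ dρ t) = dρ t := by
      conv_lhs => rw [hΦ t]
      rw [Matrix.mulVec_mulVec, Matrix.mulVec_mulVec, (hpinv t).1, ← hΦ t]
    have hker' : Lw sE tE w (ρc t) *ᵥ ((Ldag t *ᵥ dρ t) - Φ t) = 0 := by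
      rw [Matrix.mulVec_sub, hLΨ, ← hΦ t, sub_self]
    obtain ⟨c, hc⟩ := (hker t _).1 hker'
    exact ⟨c, funext fun i => by have := hc i; simp only [Pi.sub_apply] at this; linarith⟩
  have hdd : ∀ t, ddρ t = Lw sE tE w (dρ t) *ᵥ Φ t + Lw sE tE w (ρc t) *ᵥ dΦ t :=
    derivLw_eq sE tE w hnl ρc dρ ddρ Φ dΦ hd1 hd2 hd3 hΦ
  -- geodesic LHS rewritten
  have hgeo : ∀ t, ddρ t - Lw sE tE w (dρ t) *ᵥ (Ldag t *ᵥ dρ t) +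
      (1/2 : ℝ) • (Lw sE tE w (ρc t) *ᵥ
        circ sE tE w (Ldag t *ᵥ dρ t) (Ldag t *ᵥ dρ t)) =
      Lw sE tE w (ρc t) *ᵥ (dΦ t + (1/2 : ℝ) • circ sE tE w (Φ t) (Φ t)) := by
    intro t
    obtain ⟨c, hc⟩ := hΨ t
    rw [hc, Lw_shift sE tE w hnl, circ_shift sE tE w, hdd t,
      Matrix.mulVec_add, Matrix.mulVec_smul]
    abel
  constructor
  · intro hG
    refine ⟨fun t => by rw [← hΦ t]; simp, ?_⟩
    have H : ∀ t, ∃ c : ℝ, ∀ i,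
        dΦ t i + (1/2 : ℝ) * circ sE tE w (Φ t) (Φ t) i = c := by
      intro t
      have h0 : Lw sE tE w (ρc t) *ᵥ (dΦ t + (1/2 : ℝ) • circ sE tE w (Φ t) (Φ t)) = 0 := by
        rw [← hgeo t]; exact hG t
      obtain ⟨c, hc⟩ := (hker t _).1 h0
      exact ⟨c, fun i => by have := hc i; simpa using this⟩
    choose c hc using H
    exact ⟨c, hc⟩
  · rintro ⟨-, c, hc⟩
    intro t
    rw [hgeo t]
    have : (dΦ t + (1/2 : ℝ) • circ sE tE w (Φ t) (Φ t)) = fun _ => c t := by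
      funext i
      have := hc t i
      simpa using this
    rw [this]
    rw [show (fun _ : Fin n => c t) = fun i => (0 : Fin n → ℝ) i + c t by funext i; simp,
      Lw_shift sE tE w hnl, Matrix.mulVec_zero]
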